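/- Let $V$ be an $(n+1)$-dimensional vector space over a field $k$ with basis $e_0,\dots,e_n$, and let $H \subseteq \Lambda^2 V$ be the subspace spanned by the elements $w_{ij} = e_i \wedge e_j - e_0 \wedge e_{i+j}$ for $0 < i < j < n$ with $i+j \le n$, and $w_{ij} = e_i \wedge e_j - e_{i+j-n} \wedge e_n$ for $0 < i < j < n$ with $i+j > n$. Then $\dim H = \binom{n-1}{2}$, and $H$ intersects the set of decomposable 2-vectors $\{v \wedge w : v, w \in V\}$ only in $0$. -/

import Mathlib

/-!
STATEMENT 15: Let `V` be `(n+1)`-dimensional with basis `e₀,…,e_n` (`n ≥ 3`), and let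
`H ⊆ Λ²V` be spanned by the elements
`w_{ij} = eᵢ ∧ eⱼ - e₀ ∧ e_{i+j}` for `0 < i < j < n`, `i+j ≤ n`, and
`w_{ij} = eᵢ ∧ eⱼ - e_{i+j-n} ∧ e_n` for `0 < i < j < n`, `i+j > n`.
Then `dim H = binom(n-1, 2)` and `H` meets the set of decomposable 2-vectors
`{v ∧ w : v, w ∈ V}` only in `0`.
Indices are natural numbers `≤ n`, coerced into `Fin (n+1)` (the coercion is reduction
mod `n+1`, which agrees with the inclusion for indices `≤ n`).
-/

open ExteriorAlgebra
open Fin.NatCast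

noncomputable def wel (k V : Type) [Field k] [AddCommGroup V] [Module k V] (n : ℕ)
    (e : Module.Basis (Fin (n + 1)) k V) (i j : ℕ) : ExteriorAlgebra k V :=
  if i + j ≤ n then
    ι k (e i) * ι k (e j) - ι k (e 0) * ι k (e (i + j))
  else
    ι k (e i) * ι k (e j) - ι k (e (i + j - n)) * ι k (e n)

section Aux
open Finset

variable (k V : Type) [Field k] [AddCommGroup V] [Module k V]

noncomputable def alt2 (f g : V →ₗ[k] k) : V [⋀^Fin 2]→ₗ[k] k where
  toMultilinearMap := (MultilinearMap.mkPiAlgebra k (Fin 2) k).compLinearMap ![f, g]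
    - (MultilinearMap.mkPiAlgebra k (Fin 2) k).compLinearMap ![g, f]
  map_eq_zero_of_eq' := by
    intro v i j hij hne
    fin_cases i <;> fin_cases j <;>
      simp_all [Fin.prod_univ_two, mul_comm]

lemma alt2_apply (f g : V →ₗ[k] k) (v w : V) :
    alt2 k V f g ![v, w] = f v * g w - g v * f w := by
  show ((MultilinearMap.mkPiAlgebra k (Fin 2) k).compLinearMap ![f, g]
    - (MultilinearMap.mkPiAlgebra k (Fin 2) k).compLinearMap ![g, f]) ![v,w] = _
  simp [Fin.prod_univ_two]

noncomputable def fam (f g : V →ₗ[k] k) : ∀ i, V [⋀^Fin i]→ₗ[k] k :=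
  fun i => match i with | 2 => alt2 k V f g | _ => 0

noncomputable def D (f g : V →ₗ[k] k) : ExteriorAlgebra k V →ₗ[k] k :=
  liftAlternating (fam k V f g)

lemma D_apply (f g : V →ₗ[k] k) (v w : V) :
    D k V f g (ι k v * ι k w) = f v * g w - g v * f w := by
  rw [D, liftAlternating_ι_mul, liftAlternating_ι]
  show (fam k V f g 2).curryLeft v ![w] = _
  show alt2 k V f g (Matrix.vecCons v ![w]) = _
  rw [show (Matrix.vecCons v ![w]) = ![v, w] from rfl, alt2_apply]

lemma castinj {n a b : ℕ} (ha : a ≤ n) (hb : b ≤ n) :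
    ((a : Fin (n + 1)) = (b : Fin (n + 1))) ↔ a = b := by
  rw [Fin.ext_iff, Fin.val_cast_of_lt (by omega), Fin.val_cast_of_lt (by omega)]

variable (n : ℕ) (e : Module.Basis (Fin (n + 1)) k V)

noncomputable def Da (a b : ℕ) : ExteriorAlgebra k V →ₗ[k] k :=
  D k V (e.coord (a : Fin (n + 1))) (e.coord (b : Fin (n + 1)))

lemma Da_ι (a b : ℕ) (v w : V) :
    Da k V n e a b (ι k v * ι k w) =
      e.repr v a * e.repr w b - e.repr v b * e.repr w a := by
  rw [Da, D_apply]; simp [Module.Basis.coord_apply]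

lemma Da_ee (a b c d : ℕ) (ha : a ≤ n) (hb : b ≤ n) (hc : c ≤ n) (hd : d ≤ n) :
    Da k V n e a b (ι k (e c) * ι k (e d)) =
      (if c = a then (1:k) else 0) * (if d = b then 1 else 0)
        - (if c = b then (1:k) else 0) * (if d = a then 1 else 0) := by
  rw [Da_ι]
  simp only [Module.Basis.repr_self, Finsupp.single_apply]
  rw [if_congr (castinj hc ha) rfl rfl, if_congr (castinj hd hb) rfl rfl,
    if_congr (castinj hc hb) rfl rfl, if_congr (castinj hd ha) rfl rfl]

def Fm (n m : ℕ) : Finset (ℕ × ℕ) :=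
  (Finset.HasAntidiagonal.antidiagonal m).filter (fun p => p.1 < p.2 ∧ p.2 ≤ n)

lemma cast_add_fin (n i j : ℕ) :
    ((i : Fin (n + 1)) + (j : Fin (n + 1))) = ((i + j : ℕ) : Fin (n + 1)) :=
  (Nat.cast_add i j).symm

lemma cast_sub_fin (n i j : ℕ) (h : n < i + j) :
    ((i : Fin (n + 1)) + (j : Fin (n + 1)) - (n : Fin (n + 1)))
      = ((i + j - n : ℕ) : Fin (n + 1)) := by
  have h1 : ((i + j - n : ℕ) : Fin (n + 1)) + ((n : ℕ) : Fin (n + 1))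
      = ((i : ℕ) : Fin (n + 1)) + ((j : ℕ) : Fin (n + 1)) := by
    rw [← Nat.cast_add, ← Nat.cast_add]
    congr 1
    omega
  rw [← h1, add_sub_cancel_right]

lemma cast_zero_fin (n : ℕ) : (0 : Fin (n + 1)) = ((0 : ℕ) : Fin (n + 1)) := by
  norm_cast

lemma sumD (c d m : ℕ) (hcd : c < d) (hd : d ≤ n) :
    ∑ p ∈ Fm n m, Da k V n e p.1 p.2 (ι k (e c) * ι k (e d)) =
      if c + d = m then (1:k) else 0 := by
  have termval : ∀ p ∈ Fm n m,
      Da k V n e p.1 p.2 (ι k (e c) * ι k (e d)) = if p = (c, d) then (1:k) else 0 := by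
    rintro ⟨a, b⟩ hp
    simp only [Fm, Finset.mem_filter, Finset.HasAntidiagonal.mem_antidiagonal] at hp
    obtain ⟨hab, hlt, hbn⟩ := hp
    rw [Da_ee k V n e a b c d (by omega) hbn (by omega) hd]
    by_cases hpc : (a, b) = (c, d)
    · obtain ⟨rfl, rfl⟩ := Prod.mk.injEq .. ▸ hpc
      simp [hcd.ne, hcd.ne']
    · rw [if_neg hpc]
      have hx1 : ¬(c = a ∧ d = b) := fun ⟨x, y⟩ => hpc (by rw [x, y])
      have hx2 : ¬(c = b ∧ d = a) := by omega
      by_cases h1 : c = a <;> by_cases h2 : d = b <;> by_cases h3 : c = b <;>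
        by_cases h4 : d = a <;> simp_all
  rw [Finset.sum_congr rfl termval, Finset.sum_ite_eq' (Fm n m) (c, d) (fun _ => (1:k))]
  by_cases hm : c + d = m
  · rw [if_pos, if_pos hm]
    simp only [Fm, Finset.mem_filter, Finset.HasAntidiagonal.mem_antidiagonal]
    exact ⟨hm, hcd, hd⟩
  · rw [if_neg, if_neg hm]
    simp only [Fm, Finset.mem_filter, Finset.HasAntidiagonal.mem_antidiagonal]
    push_neg
    intro h; omega

lemma sum_wel (m i j : ℕ) (hi : 0 < i) (hij : i < j) (hj : j < n) :
    ∑ p ∈ Fm n m, Da k V n e p.1 p.2 (wel k V n e i j) = 0 := by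
  rw [wel]
  by_cases h : i + j ≤ n
  · rw [if_pos h, cast_add_fin, cast_zero_fin]
    simp only [map_sub]
    rw [Finset.sum_sub_distrib, sumD k V n e i j m hij (by omega),
      sumD k V n e 0 (i + j) m (by omega) h]
    simp
  · rw [if_neg h, cast_sub_fin n i j (by omega)]
    simp only [map_sub]
    rw [Finset.sum_sub_distrib, sumD k V n e i j m hij (by omega),
      sumD k V n e (i + j - n) n m (by omega) (le_refl n)]
    have h2 : i + j - n + n = i + j := by omega
    rw [h2, sub_self]

lemma Da_wel (a b i j : ℕ) (ha : 0 < a) (hab : a < b) (hbn : b < n)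
    (hi : 0 < i) (hij : i < j) (hjn : j < n) :
    Da k V n e a b (wel k V n e i j) = if i = a ∧ j = b then (1:k) else 0 := by
  rw [wel]
  by_cases h : i + j ≤ n
  · rw [if_pos h, cast_add_fin, cast_zero_fin, map_sub,
      Da_ee k V n e a b i j (by omega) (by omega) (by omega) (by omega),
      Da_ee k V n e a b 0 (i+j) (by omega) (by omega) (by omega) h]
    have hz1 : ¬((0:ℕ) = a) := by omega
    have hz2 : ¬((0:ℕ) = b) := by omega
    by_cases h1 : i = a <;> by_cases h2 : j = b <;> by_cases h3 : i = b <;>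
      by_cases h4 : j = a <;> simp_all <;> omega
  · rw [if_neg h, cast_sub_fin n i j (by omega), map_sub,
      Da_ee k V n e a b i j (by omega) (by omega) (by omega) (by omega),
      Da_ee k V n e a b (i+j-n) n (by omega) (by omega) (by omega) (le_refl n)]
    have hz1 : ¬(n = a) := by omega
    have hz2 : ¬(n = b) := by omega
    by_cases h1 : i = a <;> by_cases h2 : j = b <;> by_cases h3 : i = b <;>
      by_cases h4 : j = a <;> simp_all <;> omega

section Key
variable {k}
lemma key0 (v w : ℕ → k) (A : ℕ) (hvA : v A ≠ 0) (hwA : w A = 0)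
    (hv : ∀ i, A < i → v i = 0) (hw : ∀ i, A < i → w i = 0)
    (hS : ∀ m, ∑ p ∈ (Finset.HasAntidiagonal.antidiagonal m).filter (fun p => p.1 < p.2),
      (v p.1 * w p.2 - v p.2 * w p.1) = 0) :
    ∀ i, w i = 0 := by
  classical
  by_contra hcon
  push_neg at hcon
  obtain ⟨c0, hc0⟩ := hcon
  have hc0A : c0 ≤ A := by
    by_contra h
    exact hc0 (hw c0 (by omega))
  set C := Nat.findGreatest (fun i => w i ≠ 0) A with hC
  have hwC : w C ≠ 0 := Nat.findGreatest_spec (P := fun i => w i ≠ 0) hc0A hc0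
  have hCA : C ≤ A := Nat.findGreatest_le A
  have hCltA : C < A := lt_of_le_of_ne hCA (by intro h; rw [h] at hwC; exact hwC hwA)
  have hmax : ∀ j, C < j → w j = 0 := by
    intro j hj
    by_cases hjA : j ≤ A
    · by_contra h
      exact Nat.findGreatest_is_greatest hj hjA h
    · exact hw j (by omega)
  have := hS (A + C)
  rw [Finset.sum_eq_single_of_mem (C, A)] at this
  · simp only at this
    rw [hwA] at this
    have : v A * w C = 0 := by linear_combination -this
    rcases mul_eq_zero.mp this with h | h
    · exact hvA h
    · exact hwC h
  · simp only [Finset.mem_filter, Finset.HasAntidiagonal.mem_antidiagonal]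
    exact ⟨by omega, hCltA⟩
  · rintro ⟨a, b⟩ hmem hne
    simp only [Finset.mem_filter, Finset.HasAntidiagonal.mem_antidiagonal] at hmem
    obtain ⟨hab, hlt⟩ := hmem
    rcases lt_trichotomy b A with hbA | hbA | hbA
    · -- b < A so a = A + C - b > C, and a < b so w a = w b = 0
      have : C < a := by omega
      rw [hmax a this, hmax b (by omega)]
      ring
    · exact absurd (by rw [Prod.mk.injEq]; omega) hne
    · rw [hv b hbA, hw b hbA]
      ring

lemma key (v w : ℕ → k) (N : ℕ)
    (hv : ∀ i, N < i → v i = 0) (hw : ∀ i, N < i → w i = 0)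
    (hS : ∀ m, ∑ p ∈ (Finset.HasAntidiagonal.antidiagonal m).filter (fun p => p.1 < p.2),
      (v p.1 * w p.2 - v p.2 * w p.1) = 0) :
    ∀ i j, v i * w j = v j * w i := by
  classical
  by_cases htriv : ∀ i, v i = 0 ∧ w i = 0
  · intro i j; rw [(htriv i).1, (htriv j).1]; ring
  push_neg at htriv
  obtain ⟨a0, ha0⟩ := htriv
  have ha0' : v a0 ≠ 0 ∨ w a0 ≠ 0 := by tauto
  have ha0N : a0 ≤ N := by
    by_contra h
    rcases ha0' with h' | h'
    · exact h' (hv a0 (by omega))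
    · exact h' (hw a0 (by omega))
  set A := Nat.findGreatest (fun i => v i ≠ 0 ∨ w i ≠ 0) N with hA
  have hAspec : v A ≠ 0 ∨ w A ≠ 0 := Nat.findGreatest_spec (P := fun i => v i ≠ 0 ∨ w i ≠ 0) ha0N ha0'
  have hAle : A ≤ N := Nat.findGreatest_le N
  have hmaxv : ∀ i, A < i → v i = 0 := by
    intro i hi
    by_cases hiN : i ≤ N
    · by_contra h
      exact Nat.findGreatest_is_greatest hi hiN (Or.inl h)
    · exact hv i (by omega)
  have hmaxw : ∀ i, A < i → w i = 0 := by
    intro i hi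
    by_cases hiN : i ≤ N
    · by_contra h
      exact Nat.findGreatest_is_greatest hi hiN (Or.inr h)
    · exact hw i (by omega)
  rcases ne_or_eq (v A) 0 with hvA | hvA
  · set lam := w A / v A with hlam
    set w' := fun i => w i - lam * v i with hw'
    have hw'A : w' A = 0 := by
      simp only [hw', hlam]
      field_simp
      ring
    have hw'0 : ∀ i, w' i = 0 := by
      apply key0 v w' A hvA hw'A hmaxv
      · intro i hi; simp only [hw']; rw [hmaxw i hi, hmaxv i hi]; ring
      · intro m
        rw [← hS m]
        apply Finset.sum_congr rfl
        intro p _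
        simp only [hw']
        ring
    intro i j
    have hi := hw'0 i
    have hj := hw'0 j
    simp only [hw'] at hi hj
    have hwi : w i = lam * v i := by linear_combination hi
    have hwj : w j = lam * v j := by linear_combination hj
    rw [hwi, hwj]; ring
  · have hwA : w A ≠ 0 := by tauto
    have hv0 : ∀ i, v i = 0 := by
      apply key0 w v A hwA hvA hmaxw hmaxv
      intro m
      calc ∑ p ∈ (Finset.HasAntidiagonal.antidiagonal m).filter (fun p => p.1 < p.2),
            (w p.1 * v p.2 - w p.2 * v p.1)
          = ∑ p ∈ (Finset.HasAntidiagonal.antidiagonal m).filter (fun p => p.1 < p.2),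
            -(v p.1 * w p.2 - v p.2 * w p.1) := Finset.sum_congr rfl (fun p _ => by ring)
        _ = 0 := by rw [Finset.sum_neg_distrib, hS m, neg_zero]
    intro i j
    rw [hv0 i, hv0 j]; ring
end Key

lemma sum_range_pred (n : ℕ) : ∑ j ∈ range n, (j - 1) = (n - 1).choose 2 := by
  induction n with
  | zero => simp
  | succ t ih =>
    rw [Finset.sum_range_succ, ih]
    rcases t with _ | s
    · simp
    · show (s + 1 - 1).choose 2 + (s + 1 - 1) = (s + 1).choose 2
      have h : (s + 1).choose 2 = s.choose 1 + s.choose 2 := Nat.choose_succ_succ s 1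
      rw [Nat.choose_one_right] at h
      simp only [Nat.add_sub_cancel]
      omega

lemma card_T (n : ℕ) :
    (((range n) ×ˢ (range n)).filter fun p => 0 < p.1 ∧ p.1 < p.2).card
      = (n - 1).choose 2 := by
  classical
  have hbi : ((range n) ×ˢ (range n)).filter (fun p => 0 < p.1 ∧ p.1 < p.2)
      = (range n).biUnion (fun j => (Finset.Ioo 0 j).image (fun i => (i, j))) := by
    ext ⟨a, b⟩
    simp only [mem_filter, mem_product, mem_range, mem_biUnion, mem_image, mem_Ioo,
      Prod.mk.injEq]
    constructor
    · rintro ⟨⟨ha, hb⟩, h0, hab⟩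
      exact ⟨b, hb, a, ⟨h0, hab⟩, rfl, rfl⟩
    · rintro ⟨j, hj, i, ⟨h0, hij⟩, rfl, rfl⟩
      omega
  rw [hbi, Finset.card_biUnion]
  · have : ∀ j ∈ range n, ((Finset.Ioo 0 j).image (fun i => (i, j))).card = j - 1 := by
      intro j _
      rw [Finset.card_image_of_injective _ (fun a b h => (Prod.mk.injEq ..▸ h).1),
        Nat.card_Ioo]
      omega
    rw [Finset.sum_congr rfl this, sum_range_pred]
  · intro x _ y _ hxy
    simp only [Finset.disjoint_left, mem_image, mem_Ioo]
    rintro ⟨a, b⟩ ⟨i, _, hi⟩ ⟨i', _, hi'⟩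
    apply hxy
    have h1 := congrArg Prod.snd hi
    have h2 := congrArg Prod.snd hi'
    simp at h1 h2
    omega


end Aux

open Finset in
theorem stmt15 (k V : Type) [Field k] [AddCommGroup V] [Module k V]
    (n : ℕ) (hn : 3 ≤ n) (e : Module.Basis (Fin (n + 1)) k V) :
    let H : Submodule k (ExteriorAlgebra k V) :=
      Submodule.span k {x | ∃ i j : ℕ, 0 < i ∧ i < j ∧ j < n ∧ x = wel k V n e i j}
    Module.finrank k H = (n - 1).choose 2 ∧
      ∀ x ∈ H, (∃ v w : V, x = ι k v * ι k w) → x = 0 := by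
  classical
  intro H
  set T : Finset (ℕ × ℕ) := ((range n) ×ˢ (range n)).filter (fun p => 0 < p.1 ∧ p.1 < p.2)
    with hT
  set W : ↥T → ExteriorAlgebra k V := fun p => wel k V n e p.1.1 p.1.2 with hW
  have hset : {x | ∃ i j : ℕ, 0 < i ∧ i < j ∧ j < n ∧ x = wel k V n e i j} = Set.range W := by
    ext x
    constructor
    · rintro ⟨i, j, hi, hij, hj, rfl⟩
      refine ⟨⟨(i, j), ?_⟩, rfl⟩
      simp only [hT, mem_filter, mem_product, mem_range]
      omega
    · rintro ⟨⟨⟨i, j⟩, hp⟩, rfl⟩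
      simp only [hT, mem_filter, mem_product, mem_range] at hp
      exact ⟨i, j, hp.2.1, hp.2.2, hp.1.2, rfl⟩
  have hind : LinearIndependent k W := by
    rw [Fintype.linearIndependent_iff]
    intro g hg q
    have happ := congrArg (Da k V n e q.1.1 q.1.2) hg
    rw [map_sum, map_zero] at happ
    have hterm : ∀ p : ↥T, (Da k V n e q.1.1 q.1.2) (g p • W p) = if p = q then g p else 0 := by
      intro p
      have hp := p.2
      have hq := q.2
      simp only [hT, mem_filter, mem_product, mem_range] at hp hq
      rw [map_smul, smul_eq_mul, hW]
      rw [Da_wel k V n e q.1.1 q.1.2 p.1.1 p.1.2 hq.2.1 hq.2.2 hq.1.2 hp.2.1 hp.2.2 hp.1.2]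
      by_cases h : p = q
      · rw [if_pos h, if_pos, mul_one]
        rw [h]
        exact ⟨rfl, rfl⟩
      · rw [if_neg h, if_neg, mul_zero]
        rintro ⟨h1, h2⟩
        exact h (Subtype.ext (Prod.ext h1 h2))
    rw [Finset.sum_congr rfl (fun p _ => hterm p), Finset.sum_ite_eq' Finset.univ q g] at happ
    simp only [Finset.mem_univ, if_true] at happ
    exact happ
  constructor
  · show Module.finrank k
      ↥(Submodule.span k {x | ∃ i j : ℕ, 0 < i ∧ i < j ∧ j < n ∧ x = wel k V n e i j}) = _
    rw [hset, finrank_span_eq_card hind, Fintype.card_coe, hT, card_T n]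
  · intro x hx hdec
    obtain ⟨v, w, rfl⟩ := hdec
    have hL : ∀ m, ∑ p ∈ Fm n m, Da k V n e p.1 p.2 (ι k v * ι k w) = 0 := by
      intro m
      set L : ExteriorAlgebra k V →ₗ[k] k := ∑ p ∈ Fm n m, Da k V n e p.1 p.2 with hLdef
      have hker : H ≤ LinearMap.ker L := by
        rw [Submodule.span_le]
        rintro y ⟨i, j, hi, hij, hj, rfl⟩
        rw [SetLike.mem_coe, LinearMap.mem_ker, hLdef, LinearMap.sum_apply]
        exact sum_wel k V n e m i j hi hij hj
      have hx' := hker hx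
      rw [LinearMap.mem_ker, hLdef, LinearMap.sum_apply] at hx'
      exact hx'
    set vv : ℕ → k := fun i => if i ≤ n then e.repr v (i : Fin (n + 1)) else 0 with hvv
    set ww : ℕ → k := fun i => if i ≤ n then e.repr w (i : Fin (n + 1)) else 0 with hww
    have hva : ∀ a : Fin (n + 1), vv a.val = e.repr v a := by
      intro a
      have : a.val ≤ n := by omega
      simp only [hvv, if_pos this, Fin.cast_val_eq_self]
    have hwa : ∀ a : Fin (n + 1), ww a.val = e.repr w a := by
      intro a
      have : a.val ≤ n := by omega
      simp only [hww, if_pos this, Fin.cast_val_eq_self]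
    have hS : ∀ m, ∑ p ∈ (Finset.HasAntidiagonal.antidiagonal m).filter (fun p => p.1 < p.2),
        (vv p.1 * ww p.2 - vv p.2 * ww p.1) = 0 := by
      intro m
      have hsub : Fm n m ⊆ (Finset.HasAntidiagonal.antidiagonal m).filter (fun p => p.1 < p.2) := by
        intro p hp
        simp only [Fm, mem_filter, HasAntidiagonal.mem_antidiagonal] at hp ⊢
        exact ⟨hp.1, hp.2.1⟩
      have hzero : ∀ p ∈ (Finset.HasAntidiagonal.antidiagonal m).filter (fun p => p.1 < p.2),
          p ∉ Fm n m → vv p.1 * ww p.2 - vv p.2 * ww p.1 = 0 := by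
        intro p hp hnp
        simp only [Fm, mem_filter, HasAntidiagonal.mem_antidiagonal] at hp hnp
        have h2 : ¬ p.2 ≤ n := fun h => hnp ⟨hp.1, hp.2, h⟩
        simp only [hvv, hww, if_neg h2]
        ring
      rw [← Finset.sum_subset hsub hzero]
      rw [Finset.sum_congr rfl (fun p hp => ?_), hL m]
      simp only [Fm, mem_filter, HasAntidiagonal.mem_antidiagonal] at hp
      have h1 : p.1 ≤ n := by omega
      have h2 : p.2 ≤ n := hp.2.2
      rw [Da_ι, hvv, hww]
      simp only [if_pos h1, if_pos h2]
    have hkey := key vv ww n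
      (fun i hi => by simp only [hvv, if_neg (by omega : ¬ i ≤ n)])
      (fun i hi => by simp only [hww, if_neg (by omega : ¬ i ≤ n)]) hS
    by_cases hv0 : v = 0
    · rw [hv0, map_zero, zero_mul]
    · obtain ⟨a, ha⟩ : ∃ a, e.repr v a ≠ 0 := by
        by_contra hc
        push_neg at hc
        apply hv0
        have hrepr : e.repr v = 0 := Finsupp.ext hc
        simpa using congrArg e.repr.symm hrepr
      have hwv : w = (e.repr w a / e.repr v a) • v := by
        apply e.repr.injective
        rw [map_smul]
        ext b
        rw [Finsupp.smul_apply, smul_eq_mul]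
        have hrel : e.repr v a * e.repr w b = e.repr v b * e.repr w a := by
          have h := hkey a.val b.val
          rwa [hva, hva, hwa, hwa] at h
        field_simp
        linear_combination hrel
      rw [hwv, map_smul, mul_smul_comm, ι_sq_zero, smul_zero]
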